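/- Let 0 ≤ t < 1 and let (f_i : S_i × X_i → N_i)_{i≥1} be a sequence of biregular irreducible functions with regularity sets M_i and degrees (d_{S_i}, d_{X_i}) such that |X_i| → ∞, lim_{i→∞} (log|M_i|)/(log|X_i|) = 1 − t, and liminf_{i→∞} [min_{m∈M_i} (−log λ₂(f_i,m))] / (log|X_i|) ≥ t. Then liminf_{i→∞} (log max(d_{S_i}, d_{X_i})) / (log|X_i|) ≥ min{(1−t)/13, t}. Moreover, if M_i = N_i for all sufficiently large i, then liminf_{i→∞} (log max(d_{S_i}, d_{X_i})) / (log|X_i|) ≥ t. -/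

import Mathlib

open MeasureTheory Filter
open scoped ENNReal

noncomputable section
/-- The second-largest eigenvalue modulus of a real matrix `P` (intended: symmetric with
row sums `1`, so that its characteristic polynomial splits over `ℝ` and the largest
eigenvalue has the all-ones eigenvector): the eigenvalues of `P` with multiplicity are the
roots of its characteristic polynomial; we sort them increasingly, drop (one copy of) the
largest one, and take the maximum modulus of the remaining ones.  For eigenvalues
`μ₁ ≥ μ₂ ≥ ... ≥ μ_n` this is `max (|μ₂|, |μ_n|)`. -/
def secondEVmod {n : Type*} [Fintype n] [DecidableEq n] (P : Matrix n n ℝ) : ℝ :=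
  ((P.charpoly.roots.sort (· ≤ ·)).dropLast.map (fun μ => |μ|)).foldr max 0

/-- The symmetric stochastic matrix `P_{f,m}` associated with `f : S × X → N` and a
message `m`, with `(x,x')` entry `|{s : f(s,x) = f(s,x') = m}| / (d_S · d_X)`. -/
def briMatrix {S X N : Type*} [Fintype S] [DecidableEq N]
    (f : S → X → N) (m : N) (dS dX : ℕ) : Matrix X X ℝ :=
  Matrix.of fun x x' =>
    ((Finset.univ.filter fun s : S => f s x = m ∧ f s x' = m).card : ℝ) / (dS * dX)

/-- `λ₂(f,m)`: the second-largest eigenvalue modulus of the matrix `P_{f,m}`. -/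
def lam2 {S X N : Type*} [Fintype S] [Fintype X] [DecidableEq X] [DecidableEq N]
    (f : S → X → N) (m : N) (dS dX : ℕ) : ℝ :=
  secondEVmod (briMatrix f m dS dX)

/-- `f : S × X → N` is a biregular irreducible function with regularity set `M` and
degrees `(d_S, d_X)` (positive integers): for every `m ∈ M`, every `s` has exactly `d_S`
preimages `x` with `f(s,x) = m`, every `x` has exactly `d_X` preimages `s` with
`f(s,x) = m`, and the matrix `P_{f,m}` has second-largest eigenvalue modulus `< 1`. -/
structure IsBRI {S X N : Type*} [Fintype S] [Fintype X] [DecidableEq X] [DecidableEq N]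
    (f : S → X → N) (M : Set N) (dS dX : ℕ) : Prop where
  dS_pos : 0 < dS
  dX_pos : 0 < dX
  regS : ∀ m ∈ M, ∀ s : S, (Finset.univ.filter fun x : X => f s x = m).card = dS
  regX : ∀ m ∈ M, ∀ x : X, (Finset.univ.filter fun s : S => f s x = m).card = dX
  irred : ∀ m ∈ M, lam2 f m dS dX < 1


open Polynomial Matrix in
private lemma BRI.charpoly_conj_aux {n R : Type*} [Fintype n] [DecidableEq n] [CommRing R]
    (U V A : Matrix n n R) (hUV : U * V = 1) (_hVU : V * U = 1) :
    (U * A * V).charpoly = A.charpoly := by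
  have hmapUV : U.map C * V.map C = 1 := by
    rw [← Matrix.map_mul, hUV, Matrix.map_one _ (map_zero C) (map_one C)]
  have key : charmatrix (U * A * V) = U.map C * charmatrix A * V.map C := by
    rw [charmatrix, charmatrix]
    have hs : Matrix.scalar n (X : R[X]) = (X : R[X]) • (1 : Matrix n n R[X]) := by
      ext i j
      by_cases h : i = j <;> simp [Matrix.scalar_apply, Matrix.diagonal_apply, h]
    rw [hs, mul_sub, sub_mul, mul_smul_comm, smul_mul_assoc, mul_one, hmapUV]
    congr 1
    simp only [RingHom.mapMatrix_apply, Matrix.map_mul]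
  rw [Matrix.charpoly, Matrix.charpoly, key, det_mul, det_mul]
  have : (U.map C).det * (V.map C).det = 1 := by
    rw [← det_mul, hmapUV, det_one]
  calc (U.map C).det * (charmatrix A).det * (V.map C).det
      = (charmatrix A).det * ((U.map C).det * (V.map C).det) := by ring
    _ = (charmatrix A).det := by rw [this, mul_one]

open Polynomial Matrix in
private lemma BRI.charpoly_diagonal' {n R : Type*} [Fintype n] [DecidableEq n] [CommRing R]
    (d : n → R) : (Matrix.diagonal d).charpoly = ∏ i, (X - C (d i)) := by
  rw [Matrix.charpoly]
  have : charmatrix (Matrix.diagonal d) = Matrix.diagonal (fun i => X - C (d i)) := by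
    ext i j
    by_cases h : i = j
    · subst h; simp [charmatrix_apply_eq]
    · simp [charmatrix_apply_ne _ _ _ h, Matrix.diagonal_apply_ne _ h]
  rw [this, det_diagonal]

open Polynomial Matrix in
private lemma BRI.roots_charpoly_hermitian {n : Type*} [Fintype n] [DecidableEq n]
    {A : Matrix n n ℝ} (hA : A.IsHermitian) :
    A.charpoly.roots = Finset.univ.val.map hA.eigenvalues := by
  have hspec := hA.spectral_theorem
  have hU1 : (hA.eigenvectorUnitary : Matrix n n ℝ) *
      (star hA.eigenvectorUnitary : Matrix n n ℝ) = 1 :=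
    Matrix.mem_unitaryGroup_iff.mp hA.eigenvectorUnitary.2
  have hU2 : (star hA.eigenvectorUnitary : Matrix n n ℝ) *
      (hA.eigenvectorUnitary : Matrix n n ℝ) = 1 :=
    Matrix.mem_unitaryGroup_iff'.mp hA.eigenvectorUnitary.2
  have hcp : A.charpoly
      = (Matrix.diagonal (RCLike.ofReal ∘ hA.eigenvalues) : Matrix n n ℝ).charpoly := by
    conv_lhs => rw [hspec]
    exact BRI.charpoly_conj_aux _ _ _ hU1 hU2
  rw [hcp, BRI.charpoly_diagonal']
  have h1 : ∀ i : n, (RCLike.ofReal ∘ hA.eigenvalues) i = hA.eigenvalues i := fun i => rfl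
  simp_rw [h1]
  have h2 : (∏ i, (X - C (hA.eigenvalues i))) =
      ((Finset.univ.val.map hA.eigenvalues).map (fun a => X - C a)).prod := by
    rw [Multiset.map_map]; rfl
  rw [h2, Polynomial.roots_multiset_prod_X_sub_C]

open Polynomial Matrix in
private lemma BRI.hasEigenvalue_of_hermitian {n : Type*} [Fintype n] [DecidableEq n]
    {A : Matrix n n ℝ} (hA : A.IsHermitian) (j : n) :
    Module.End.HasEigenvalue (Matrix.toLin' A) (hA.eigenvalues j) := by
  apply Module.End.hasEigenvalue_of_hasEigenvector (x := ⇑(hA.eigenvectorBasis j))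
  constructor
  · rw [Module.End.mem_eigenspace_iff, Matrix.toLin'_apply]
    rw [hA.mulVec_eigenvectorBasis]
  · intro h
    have h1 : ‖hA.eigenvectorBasis j‖ = 1 := hA.eigenvectorBasis.orthonormal.1 j
    have : hA.eigenvectorBasis j = 0 := by
      ext i
      exact congrFun h i
    rw [this, norm_zero] at h1
    norm_num at h1

open Polynomial Matrix in
private lemma BRI.abs_eigenvalue_le_one {n : Type*} [Fintype n] [DecidableEq n]
    {A : Matrix n n ℝ} (hnn : ∀ i j, 0 ≤ A i j) (hrow : ∀ i, ∑ j, A i j = 1)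
    {μ : ℝ} (hμ : Module.End.HasEigenvalue (Matrix.toLin' A) μ) : |μ| ≤ 1 := by
  obtain ⟨k, hk⟩ := eigenvalue_mem_ball hμ
  rw [Metric.mem_closedBall, Real.dist_eq] at hk
  have h1 : ∑ j ∈ Finset.univ.erase k, ‖A k j‖ = 1 - A k k := by
    have : ∀ j ∈ Finset.univ.erase k, ‖A k j‖ = A k j := fun j _ =>
      Real.norm_of_nonneg (hnn k j)
    rw [Finset.sum_congr rfl this, Finset.sum_erase_eq_sub (Finset.mem_univ k), hrow k]
  rw [h1] at hk
  have h2 : 0 ≤ A k k := hnn k k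
  calc |μ| = |(μ - A k k) + A k k| := by ring_nf
    _ ≤ |μ - A k k| + |A k k| := abs_add_le _ _
    _ ≤ (1 - A k k) + A k k := by gcongr; rw [abs_of_nonneg h2]
    _ = 1 := by ring

private lemma BRI.foldr_max_nonneg (l : List ℝ) : 0 ≤ l.foldr max 0 := by
  induction l with
  | nil => simp
  | cons a l ih => simp only [List.foldr_cons]; exact le_max_of_le_right ih

private lemma BRI.le_foldr_max {l : List ℝ} {a : ℝ} (h : a ∈ l) : a ≤ l.foldr max 0 := by
  induction l with
  | nil => simp at h
  | cons b l ih =>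
    simp only [List.foldr_cons]
    rcases List.mem_cons.mp h with h | h
    · exact h ▸ le_max_left _ _
    · exact le_max_of_le_right (ih h)

open Polynomial Matrix in
private lemma BRI.secondEVmod_ge {n : Type*} [Fintype n] [DecidableEq n] {A : Matrix n n ℝ}
    (hA : A.IsHermitian) (hnn : ∀ i j, 0 ≤ A i j) (hrow : ∀ i, ∑ j, A i j = 1)
    (hcard : 2 ≤ Fintype.card n) :
    (A.trace - 1) / (Fintype.card n - 1) ≤ secondEVmod A := by
  classical
  set L : List ℝ := A.charpoly.roots.sort (· ≤ ·) with hL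
  have hLcoe : (↑L : Multiset ℝ) = A.charpoly.roots := A.charpoly.roots.sort_eq _
  have hlen : L.length = Fintype.card n := by
    have := congrArg Multiset.card hLcoe
    simpa [BRI.roots_charpoly_hermitian hA] using this
  have hmem : ∀ μ ∈ L, |μ| ≤ 1 := by
    intro μ hμ
    have : μ ∈ A.charpoly.roots := by rw [← hLcoe]; exact_mod_cast hμ
    rw [BRI.roots_charpoly_hermitian hA] at this
    obtain ⟨j, _, rfl⟩ := Multiset.mem_map.mp this
    exact BRI.abs_eigenvalue_le_one hnn hrow (BRI.hasEigenvalue_of_hermitian hA j)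
  have htr : A.trace = L.sum := by
    have h1 : A.trace = ∑ i, hA.eigenvalues i := by
      conv_lhs => rw [hA.spectral_theorem]
      rw [Unitary.conjStarAlgAut_apply]
      rw [Matrix.trace_mul_cycle, Matrix.mem_unitaryGroup_iff'.mp hA.eigenvectorUnitary.2,
        one_mul, Matrix.trace_diagonal]
      rfl
    have h2 : L.sum = (Finset.univ.val.map hA.eigenvalues).sum := by
      rw [← Multiset.sum_coe, hLcoe, BRI.roots_charpoly_hermitian hA]
    rw [h1, h2]
    rfl
  have hne : L ≠ [] := by
    intro h; rw [h] at hlen; simp at hlen; omega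
  have hsplit : L.dropLast.sum + L.getLast hne = L.sum := by
    conv_rhs => rw [← List.dropLast_append_getLast hne]
    rw [List.sum_append, List.sum_cons, List.sum_nil, add_zero]
  have hlast : L.getLast hne ≤ 1 := by
    have := hmem _ (List.getLast_mem hne)
    exact (le_abs_self _).trans this
  have hdroplen : L.dropLast.length = Fintype.card n - 1 := by
    rw [List.length_dropLast, hlen]
  set lam := (L.dropLast.map (fun μ => |μ|)).foldr max 0 with hlam
  have hbound : ∀ x ∈ L.dropLast, x ≤ lam := by
    intro x hx
    refine (le_abs_self x).trans (BRI.le_foldr_max ?_)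
    exact List.mem_map.mpr ⟨x, hx, rfl⟩
  have hsum_le : L.dropLast.sum ≤ L.dropLast.length • lam :=
    List.sum_le_card_nsmul _ _ hbound
  have hcardn : (1:ℝ) ≤ (Fintype.card n : ℝ) - 1 := by
    have : (2:ℝ) ≤ (Fintype.card n : ℝ) := by exact_mod_cast hcard
    linarith
  rw [div_le_iff₀ (by linarith)]
  have hkey : A.trace - 1 ≤ L.dropLast.sum := by
    rw [← hsplit] at htr; linarith
  calc A.trace - 1 ≤ L.dropLast.sum := hkey
    _ ≤ L.dropLast.length • lam := hsum_le
    _ = ((Fintype.card n : ℝ) - 1) * lam := by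
        rw [hdroplen, nsmul_eq_mul]
        congr 1
        have h1 : (1:ℕ) ≤ Fintype.card n := by omega
        push_cast [Nat.cast_sub h1]
        ring
    _ = lam * ((Fintype.card n : ℝ) - 1) := by ring

section BRIfacts
variable {S X N : Type*} [Fintype S] [Fintype X] [DecidableEq X] [DecidableEq N]
  (f : S → X → N) (m : N) (dS dX : ℕ)

private lemma BRI.briMatrix_herm : (briMatrix f m dS dX).IsHermitian := by
  rw [Matrix.IsHermitian]
  ext x x'
  simp only [Matrix.conjTranspose_apply, briMatrix, Matrix.of_apply, starRingEnd_apply,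
    star_trivial]
  have : (Finset.univ.filter fun s : S => f s x' = m ∧ f s x = m)
      = (Finset.univ.filter fun s : S => f s x = m ∧ f s x' = m) :=
    Finset.filter_congr (fun s _ => by rw [and_comm])
  rw [this]

private lemma BRI.briMatrix_nonneg (x x' : X) : 0 ≤ briMatrix f m dS dX x x' := by
  unfold briMatrix
  simp only [Matrix.of_apply]
  positivity

private lemma BRI.briMatrix_rowsum (hdS : 0 < dS) (hdX : 0 < dX)
    (hregS : ∀ s, (Finset.univ.filter fun x : X => f s x = m).card = dS)
    (hregX : ∀ x, (Finset.univ.filter fun s : S => f s x = m).card = dX)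
    (x : X) : ∑ x', briMatrix f m dS dX x x' = 1 := by
  have key : ∑ x' : X, ((Finset.univ.filter fun s : S => f s x = m ∧ f s x' = m).card : ℝ)
      = (dX : ℝ) * dS := by
    have h1 : ∀ x' : X, ((Finset.univ.filter fun s : S => f s x = m ∧ f s x' = m).card : ℝ)
        = ∑ s : S, if f s x = m ∧ f s x' = m then (1:ℝ) else 0 := by
      intro x'; rw [Finset.card_filter]; push_cast; rfl
    rw [Finset.sum_congr rfl (fun x' _ => h1 x'), Finset.sum_comm]
    have h2 : ∀ s : S, (∑ x' : X, if f s x = m ∧ f s x' = m then (1:ℝ) else 0)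
        = if f s x = m then (dS : ℝ) else 0 := by
      intro s
      by_cases h : f s x = m
      · simp only [h, true_and, if_true]
        rw [← hregS s, Finset.card_filter]
        push_cast; rfl
      · simp [h]
    rw [Finset.sum_congr rfl (fun s _ => h2 s), ← Finset.sum_filter, Finset.sum_const,
      hregX x, nsmul_eq_mul]
  unfold briMatrix
  simp only [Matrix.of_apply]
  rw [← Finset.sum_div, key]
  rw [div_eq_one_iff_eq (by positivity)]
  push_cast; ring

private lemma BRI.briMatrix_trace
    (hregX : ∀ x, (Finset.univ.filter fun s : S => f s x = m).card = dX) (hdX : 0 < dX) :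
    (briMatrix f m dS dX).trace = (Fintype.card X : ℝ) / dS := by
  rw [Matrix.trace]
  have h1 : ∀ x : X, (briMatrix f m dS dX).diag x = (dX : ℝ) / (dS * dX) := by
    intro x
    unfold briMatrix
    simp only [Matrix.diag_apply, Matrix.of_apply]
    congr 1
    rw [← hregX x]
    norm_cast
    congr 1
    exact Finset.filter_congr (fun s _ => by rw [and_self])
  rw [Finset.sum_congr rfl (fun x _ => h1 x), Finset.sum_const, nsmul_eq_mul]
  rw [Finset.card_univ]
  have hdX' : ((dX:ℝ)) ≠ 0 := by positivity
  have h2 : (dX:ℝ)/((dS:ℝ)*dX) = 1/(dS:ℝ) := by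
    rw [mul_comm, div_mul_eq_div_div, div_self hdX']
  rw [h2, mul_one_div]

private lemma BRI.lam2_lower (hdS : 0 < dS) (hdX : 0 < dX)
    (hregS : ∀ s, (Finset.univ.filter fun x : X => f s x = m).card = dS)
    (hregX : ∀ x, (Finset.univ.filter fun s : S => f s x = m).card = dX)
    (hcard : 2 ≤ Fintype.card X) (h2dS : 2 * dS ≤ Fintype.card X) :
    1 / (2 * (dS : ℝ)) ≤ lam2 f m dS dX := by
  have hmain := BRI.secondEVmod_ge (BRI.briMatrix_herm f m dS dX)
    (BRI.briMatrix_nonneg f m dS dX)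
    (BRI.briMatrix_rowsum f m dS dX hdS hdX hregS hregX) hcard
  rw [BRI.briMatrix_trace f m dS dX hregX hdX] at hmain
  refine le_trans ?_ hmain
  have hn2 : (2:ℝ) ≤ (Fintype.card X : ℝ) := by exact_mod_cast hcard
  have hd1 : (1:ℝ) ≤ (dS:ℝ) := by exact_mod_cast hdS
  have h2d : 2 * (dS:ℝ) ≤ (Fintype.card X : ℝ) := by exact_mod_cast h2dS
  rw [div_le_div_iff₀ (by linarith) (by linarith)]
  have hexp : (Fintype.card X : ℝ) / (dS:ℝ) * (2 * (dS:ℝ)) = 2 * (Fintype.card X : ℝ) := by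
    field_simp
  nlinarith [hexp]

end BRIfacts

/-- **Lemma 8 of the paper.** Under the optimality hypotheses on the
sequence of biregular irreducible functions (`|X_i| → ∞`, `log|M_i|/log|X_i| → 1 − t`,
`liminf (min_{m}(−log λ₂(f_i,m)))/log|X_i| ≥ t`), the maximum degree satisfies
`liminf_i log(max(d_{S_i}, d_{X_i}))/log|X_i| ≥ min{(1−t)/13, t}` (liminf bounds stated
in their `∀ ε > 0`-eventual form); and if moreover `M_i = N_i` for all large `i`, then
`liminf_i log(max(d_{S_i}, d_{X_i}))/log|X_i| ≥ t`. -/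
theorem stmt_18 (t : ℝ) (ht0 : 0 ≤ t) (ht1 : t < 1)
    (sS sX sN : ℕ → ℕ) (f : ∀ i, Fin (sS i) → Fin (sX i) → Fin (sN i))
    (M : ∀ i, Set (Fin (sN i))) (dS dX : ℕ → ℕ)
    (hBRI : ∀ i, IsBRI (f i) (M i) (dS i) (dX i))
    (hX : Tendsto (fun i => (sX i : ℝ)) atTop atTop)
    (hrate : Tendsto (fun i => Real.logb 2 (Nat.card (M i)) / Real.logb 2 (sX i)) atTop
      (nhds (1 - t)))
    (hEV : ∀ ε > 0, ∀ᶠ i in atTop,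
      t - ε ≤ sInf ((fun m => -Real.logb 2 (lam2 (f i) m (dS i) (dX i))) '' (M i)) /
        Real.logb 2 (sX i)) :
    (∀ ε > 0, ∀ᶠ i in atTop,
      min ((1 - t) / 13) t - ε
        ≤ Real.logb 2 (max (dS i) (dX i)) / Real.logb 2 (sX i)) ∧
    ((∀ᶠ i in atTop, M i = Set.univ) →
      ∀ ε > 0, ∀ᶠ i in atTop,
        t - ε ≤ Real.logb 2 (max (dS i) (dX i)) / Real.logb 2 (sX i)) := by
  have h2 : ∀ᶠ i in atTop, (2:ℝ) ≤ (sX i : ℝ) := hX.eventually_ge_atTop 2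
  have hlogtop : Tendsto (fun i => Real.logb 2 (sX i)) atTop atTop :=
    (Real.tendsto_logb_atTop one_lt_two).comp hX
  have hMne : ∀ᶠ i in atTop, (M i).Nonempty := by
    have h1 : ∀ᶠ i in atTop,
        (1 - t)/2 < Real.logb 2 (Nat.card (M i)) / Real.logb 2 (sX i) :=
      hrate.eventually (eventually_gt_nhds (by linarith))
    filter_upwards [h1] with i hi
    by_contra hne
    rw [Set.not_nonempty_iff_eq_empty] at hne
    have hc : Nat.card (M i) = 0 := by rw [hne]; simp
    rw [hc] at hi
    simp only [Nat.cast_zero, Real.logb_zero, zero_div] at hi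
    linarith
  -- max(dS,dX) ≥ dS in logb, divided by Li
  have hmaxlog : ∀ i, 1 ≤ dS i →
      Real.logb 2 (dS i) ≤ Real.logb 2 (max (dS i) (dX i)) := by
    intro i h1
    apply Real.logb_le_logb_of_le one_lt_two (by exact_mod_cast h1)
    exact_mod_cast le_max_left (dS i) (dX i)
  constructor
  · -- Part 1 via spectral bound
    intro ε hε
    have hE2 : ∀ᶠ i in atTop, 2/ε ≤ Real.logb 2 (sX i) := hlogtop.eventually_ge_atTop _
    filter_upwards [h2, hE2, hEV (ε/2) (by linarith), hMne] with i hsx hli hev hMne'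
    obtain ⟨m, hm⟩ := hMne'
    have hLi : 0 < Real.logb 2 (sX i) := Real.logb_pos one_lt_two (by linarith)
    set Li := Real.logb 2 (sX i) with hLidef
    have hdSpos := (hBRI i).dS_pos
    have hdXpos := (hBRI i).dX_pos
    have hmain : (t - ε) * Li ≤ Real.logb 2 (dS i) := by
      by_cases hcase : 2 * dS i ≤ sX i
      · have hlam := BRI.lam2_lower (f i) m (dS i) (dX i) hdSpos hdXpos
          ((hBRI i).regS m hm) ((hBRI i).regX m hm)
          (by simp only [Fintype.card_fin]; exact_mod_cast hsx)
          (by simp only [Fintype.card_fin]; exact hcase)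
        have hlampos : (0:ℝ) < lam2 (f i) m (dS i) (dX i) :=
          lt_of_lt_of_le (by positivity) hlam
        have hlog1 : -Real.logb 2 (lam2 (f i) m (dS i) (dX i))
            ≤ 1 + Real.logb 2 (dS i) := by
          have ha : Real.logb 2 (1/(2*(dS i:ℝ))) ≤ Real.logb 2 (lam2 (f i) m (dS i) (dX i)) :=
            Real.logb_le_logb_of_le one_lt_two (by positivity) hlam
          have hb : Real.logb 2 (1/(2*(dS i:ℝ))) = -(1 + Real.logb 2 (dS i)) := by
            rw [one_div, Real.logb_inv, Real.logb_mul two_ne_zero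
              (by positivity), Real.logb_self_eq_one one_lt_two]
          linarith
        have hsinf : sInf ((fun m => -Real.logb 2 (lam2 (f i) m (dS i) (dX i))) '' (M i))
            ≤ -Real.logb 2 (lam2 (f i) m (dS i) (dX i)) :=
          csInf_le (((M i).toFinite.image _).bddBelow) ⟨m, hm, rfl⟩
        have hev' : (t - ε/2) * Li
            ≤ sInf ((fun m => -Real.logb 2 (lam2 (f i) m (dS i) (dX i))) '' (M i)) :=
          (le_div_iff₀ hLi).mp hev
        have hεLi : 1 ≤ (ε/2) * Li := by
          have hc : ε/2 * (2/ε) = 1 := by field_simp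
          calc (1:ℝ) = ε/2 * (2/ε) := hc.symm
            _ ≤ ε/2 * Li := by gcongr
        linarith
      · push_neg at hcase
        have hd : (sX i : ℝ)/2 ≤ (dS i : ℝ) := by
          have hc : sX i + 1 ≤ 2 * dS i := hcase
          have : (sX i : ℝ) + 1 ≤ 2 * (dS i : ℝ) := by exact_mod_cast hc
          linarith
        have hlog : Li - 1 ≤ Real.logb 2 (dS i) := by
          have ha : Real.logb 2 ((sX i:ℝ)/2) ≤ Real.logb 2 (dS i) :=
            Real.logb_le_logb_of_le one_lt_two (by linarith) hd
          rw [Real.logb_div (by linarith) two_ne_zero,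
            Real.logb_self_eq_one one_lt_two] at ha
          exact ha
        have h1t : 0 ≤ (1 - t) * Li := mul_nonneg (by linarith) hLi.le
        have hεLi : 2 ≤ ε * Li := by
          have hc : ε * (2/ε) = 2 := by field_simp
          calc (2:ℝ) = ε * (2/ε) := hc.symm
            _ ≤ ε * Li := by gcongr
        nlinarith
    rw [le_div_iff₀ hLi]
    have hmin := min_le_right ((1 - t) / 13) t
    calc (min ((1 - t) / 13) t - ε) * Li ≤ (t - ε) * Li := by
          apply mul_le_mul_of_nonneg_right _ hLi.le
          linarith
      _ ≤ Real.logb 2 (dS i) := hmain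
      _ ≤ Real.logb 2 (max (dS i) (dX i)) := hmaxlog i hdSpos
  · -- Part 2 via exact counting
    intro hMuniv ε hε
    have hup : ∀ᶠ i in atTop,
        Real.logb 2 (Nat.card (M i)) / Real.logb 2 (sX i) < 1 - t + ε :=
      hrate.eventually (eventually_lt_nhds (by linarith))
    filter_upwards [h2, hMuniv, hup, hMne] with i hsx hMu hup' hMne'
    have hLi : 0 < Real.logb 2 (sX i) := Real.logb_pos one_lt_two (by linarith)
    set Li := Real.logb 2 (sX i) with hLidef
    obtain ⟨m, hm⟩ := hMne'
    have hdSpos := (hBRI i).dS_pos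
    have hdXpos := (hBRI i).dX_pos
    have hcardM : Nat.card (M i) = sN i := by
      rw [hMu, Nat.card_congr (Equiv.Set.univ (Fin (sN i))), Nat.card_eq_fintype_card,
        Fintype.card_fin]
    have hsNpos : 0 < sN i := by
      have : Nonempty (Fin (sN i)) := ⟨m⟩
      exact Fin.pos_iff_nonempty.mpr this
    have hsXpos : 0 < sX i := by
      have : (0:ℝ) < sX i := by linarith
      exact_mod_cast this
    have hx0 : Fin (sX i) := ⟨0, hsXpos⟩
    have hSne : Nonempty (Fin (sS i)) := by
      by_contra h
      rw [not_nonempty_iff] at h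
      have hc := (hBRI i).regX m hm hx0
      rw [Finset.univ_eq_empty, Finset.filter_empty, Finset.card_empty] at hc
      omega
    obtain ⟨s⟩ := hSne
    have hpart : sN i * dS i = sX i := by
      have hfib := Finset.card_eq_sum_card_fiberwise
        (f := fun x : Fin (sX i) => f i s x) (s := Finset.univ) (t := Finset.univ)
        (fun x _ => Finset.mem_univ _)
      rw [Finset.card_univ, Fintype.card_fin] at hfib
      have h2' : ∀ m' ∈ (Finset.univ : Finset (Fin (sN i))),
          (Finset.univ.filter fun x => f i s x = m').card = dS i :=
        fun m' _ => (hBRI i).regS m' (by rw [hMu]; trivial) s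
      rw [Finset.sum_congr rfl h2', Finset.sum_const, Finset.card_univ, Fintype.card_fin,
        smul_eq_mul] at hfib
      omega
    have hlog : Li = Real.logb 2 (sN i) + Real.logb 2 (dS i) := by
      rw [hLidef]
      have hc : (sX i : ℝ) = (sN i : ℝ) * (dS i : ℝ) := by exact_mod_cast hpart.symm
      rw [hc, Real.logb_mul (by positivity) (by positivity)]
    have hup'' : Real.logb 2 (sN i) / Li < 1 - t + ε := by
      have : (Nat.card (M i) : ℝ) = (sN i : ℝ) := by exact_mod_cast hcardM
      rw [← this]
      exact hup'
    have hkey : t - ε ≤ Real.logb 2 (dS i) / Li := by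
      have hd : Real.logb 2 (dS i) / Li = 1 - Real.logb 2 (sN i) / Li := by
        field_simp
        linarith [hlog]
      rw [hd]
      linarith
    refine hkey.trans ?_
    exact (div_le_div_iff_of_pos_right hLi).mpr (hmaxlog i hdSpos)

end
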